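/- In the setting of the inertial forward-backward-forward algorithm (f proper lsc bounded below, h differentiable with L_{∇h}-Lipschitz gradient, u σ-strongly convex with L_{∇u}-Lipschitz gradient, 0 < λ̲ ≤ λ_n ≤ λ̄, 0 ≤ α_n ≤ α), for every ν, μ > 0 and every n ≥ 2: (f+h)(p_n) + M₁·‖x_n - p_n‖² ≤ (f+h)(p_{n-1}) + M₂·‖x_{n-1} - p_{n-1}‖², where M₁ = σ/(2λ̄) - L_{∇h} - ν - (α/λ̲)·μ and M₂ = λ̄²·L_{∇h}²·(L_{∇h}²/(2ν) + ν + L_{∇h} + L_{∇u}/(2λ̲)) + (α/λ̲)·(μ·λ̄²·L_{∇h}² + (1 + λ̄·L_{∇h})²/(2μ)). -/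

import Mathlib

open Filter Topology

section Aux
variable {E : Type*} [NormedAddCommGroup E] [InnerProductSpace ℝ E] [CompleteSpace E]

lemma aux_lineDeriv (g : E → ℝ) (g' : E → E) (hd : ∀ z, HasGradientAt g (g' z) z)
    (x v : E) (t : ℝ) :
    HasDerivAt (fun s : ℝ => g (x + s • v)) (inner ℝ (g' (x + t • v)) v : ℝ) t := by
  have h0 : HasDerivAt (fun s : ℝ => s • v) v t := by
    simpa using (hasDerivAt_id t).smul_const v
  have hline : HasDerivAt (fun s : ℝ => x + s • v) v t := h0.const_add x
  have hg := hasGradientAt_iff_hasFDerivAt.mp (hd (x + t • v))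
  have := hg.comp_hasDerivAt t hline
  simp only [Function.comp_def, InnerProductSpace.toDual_apply_apply] at this
  exact this

lemma aux_convex_grad (g : E → ℝ) (g' : E → E) (hd : ∀ z, HasGradientAt g (g' z) z)
    (hc : ConvexOn ℝ Set.univ g) (x y : E) :
    g x + (inner ℝ (g' x) (y - x) : ℝ) ≤ g y := by
  set v := y - x with hv
  have hφ : HasDerivAt (fun s : ℝ => g (x + s • v)) (inner ℝ (g' x) v : ℝ) 0 := by
    simpa using aux_lineDeriv g g' hd x v 0
  have hconvφ : ConvexOn ℝ Set.univ (fun s : ℝ => g (x + s • v)) := by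
    have h1 := hc.comp_affineMap (AffineMap.lineMap x y)
    have h2 : (g ∘ (AffineMap.lineMap x y)) = fun s : ℝ => g (x + s • v) := by
      funext s
      simp [AffineMap.lineMap_apply, hv, add_comm]
    rw [h2] at h1
    simpa using h1
  have hs := hconvφ.le_slope_of_hasDerivAt (Set.mem_univ (0:ℝ)) (Set.mem_univ (1:ℝ)) one_pos hφ
  rw [slope_def_field] at hs
  simp only [one_smul, zero_smul, add_zero, sub_zero, div_one] at hs
  have hxy : x + v = y := by rw [hv]; abel
  rw [hxy] at hs
  linarith

lemma aux_monotone_convex (g : E → ℝ) (g' : E → E) (hd : ∀ z, HasGradientAt g (g' z) z)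
    (hm : ∀ z w, 0 ≤ (inner ℝ (g' z - g' w) (z - w) : ℝ)) : ConvexOn ℝ Set.univ g := by
  refine ⟨convex_univ, ?_⟩
  intro a _ b _ s t hs ht hst
  set v := a - b with hv
  have hconvφ : ConvexOn ℝ Set.univ (fun r : ℝ => g (b + r • v)) := by
    apply Monotone.convexOn_univ_of_deriv
    · exact fun r => (aux_lineDeriv g g' hd b v r).differentiableAt
    · have hderiv : ∀ r : ℝ, deriv (fun r : ℝ => g (b + r • v)) r
          = (inner ℝ (g' (b + r • v)) v : ℝ) := fun r => (aux_lineDeriv g g' hd b v r).deriv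
      intro r1 r2 hr
      rw [hderiv, hderiv]
      rcases eq_or_lt_of_le hr with hEq | hlt
      · rw [hEq]
      · have hmm := hm (b + r2 • v) (b + r1 • v)
        have hz : (b + r2 • v) - (b + r1 • v) = (r2 - r1) • v := by
          rw [add_sub_add_left_eq_sub, ← sub_smul]
        rw [hz, real_inner_smul_right, inner_sub_left] at hmm
        nlinarith [hmm, hlt]
  have hkey := hconvφ.2 (Set.mem_univ (1:ℝ)) (Set.mem_univ (0:ℝ)) hs ht hst
  simp only [smul_eq_mul, mul_one, mul_zero, add_zero, zero_smul, one_smul] at hkey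
  have h1 : b + v = a := by rw [hv]; abel
  have ht' : t = 1 - s := by linarith
  have h2 : b + s • v = s • a + t • b := by
    rw [hv, ht', smul_sub, sub_smul, one_smul]; abel
  rw [h1, h2] at hkey
  exact hkey

lemma aux_grad_sub (f₁ f₂ : E → ℝ) (a b : E) (z : E)
    (h₁ : HasGradientAt f₁ a z) (h₂ : HasGradientAt f₂ b z) :
    HasGradientAt (fun w => f₁ w - f₂ w) (a - b) z := by
  rw [hasGradientAt_iff_hasFDerivAt] at *
  rw [map_sub]
  exact h₁.sub h₂

lemma aux_gradsq (c : ℝ) (z : E) :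
    HasGradientAt (fun w : E => c * ‖w‖ ^ 2) ((2 * c) • z) z := by
  rw [hasGradientAt_iff_hasFDerivAt]
  have hsq := ((hasFDerivAt_id z).inner ℝ (hasFDerivAt_id z)).const_mul c
  convert hsq using 1
  · rfl
  · funext w
    rw [← real_inner_self_eq_norm_sq]
    simp
  · ext v
    simp [InnerProductSpace.toDual_apply_apply, fderivInnerCLM_apply, real_inner_smul_left,
      real_inner_comm]
    ring

lemma aux_descent (hh : E → ℝ) (hh' : E → E) (hd : ∀ z, HasGradientAt hh (hh' z) z)
    (L : ℝ) (hL : 0 ≤ L) (hlip : ∀ z w, ‖hh' z - hh' w‖ ≤ L * ‖z - w‖) (x y : E) :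
    hh y ≤ hh x + (inner ℝ (hh' x) (y - x) : ℝ) + L / 2 * ‖y - x‖ ^ 2 := by
  have hψd : ∀ z : E, HasGradientAt (fun w : E => L / 2 * ‖w‖ ^ 2 - hh w)
      ((2 * (L / 2)) • z - hh' z) z := fun z => aux_grad_sub _ _ _ _ z (aux_gradsq (L/2) z) (hd z)
  have hψm : ∀ z w : E, 0 ≤ (inner ℝ (((2 * (L / 2)) • z - hh' z) - ((2 * (L / 2)) • w - hh' w))
      (z - w) : ℝ) := by
    intro z w
    have h1 : (inner ℝ (hh' z - hh' w) (z - w) : ℝ) ≤ ‖hh' z - hh' w‖ * ‖z - w‖ :=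
      real_inner_le_norm _ _
    have h2 := hlip z w
    have h3 : ((2 * (L / 2)) • z - hh' z) - ((2 * (L / 2)) • w - hh' w)
        = (2 * (L / 2)) • (z - w) - (hh' z - hh' w) := by
      rw [smul_sub]; abel
    rw [h3, inner_sub_left, real_inner_smul_left, real_inner_self_eq_norm_sq]
    nlinarith [norm_nonneg (z - w), norm_nonneg (hh' z - hh' w),
      mul_le_mul_of_nonneg_right h2 (norm_nonneg (z - w))]
  have hψc := aux_monotone_convex _ _ hψd hψm
  have hkey := aux_convex_grad _ _ hψd hψc x y
  simp only [inner_sub_left, real_inner_smul_left] at hkey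
  have e1 : (inner ℝ x (y - x) : ℝ) = (inner ℝ x y : ℝ) - ‖x‖ ^ 2 := by
    rw [inner_sub_right, real_inner_self_eq_norm_sq]
  have e2 : ‖y - x‖ ^ 2 = ‖y‖ ^ 2 - 2 * (inner ℝ y x : ℝ) + ‖x‖ ^ 2 := norm_sub_sq_real y x
  have e3 : (inner ℝ y x : ℝ) = (inner ℝ x y : ℝ) := real_inner_comm x y
  rw [e1] at hkey
  rw [e2, e3]
  linarith [hkey]

lemma aux_strong (u : E → ℝ) (u' : E → E) (hd : ∀ z, HasGradientAt u (u' z) z)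
    (σ : ℝ) (hconv : ConvexOn ℝ Set.univ (fun z => u z - σ / 2 * ‖z‖ ^ 2)) (x y : E) :
    u x + (inner ℝ (u' x) (y - x) : ℝ) + σ / 2 * ‖y - x‖ ^ 2 ≤ u y := by
  have hgd : ∀ z : E, HasGradientAt (fun w : E => u w - σ / 2 * ‖w‖ ^ 2)
      (u' z - (2 * (σ / 2)) • z) z := fun z => aux_grad_sub _ _ _ _ z (hd z) (aux_gradsq (σ/2) z)
  have hkey := aux_convex_grad _ _ hgd hconv x y
  simp only [inner_sub_left, real_inner_smul_left] at hkey
  have e1 : (inner ℝ x (y - x) : ℝ) = (inner ℝ x y : ℝ) - ‖x‖ ^ 2 := by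
    rw [inner_sub_right, real_inner_self_eq_norm_sq]
  have e2 : ‖y - x‖ ^ 2 = ‖y‖ ^ 2 - 2 * (inner ℝ y x : ℝ) + ‖x‖ ^ 2 := norm_sub_sq_real y x
  have e3 : (inner ℝ y x : ℝ) = (inner ℝ x y : ℝ) := real_inner_comm x y
  rw [e1] at hkey
  rw [e2, e3]
  linarith [hkey]

end Aux

lemma aux_final {σ Lh Lu lamL lamU α ν μ lmn aln : ℝ}
    {rn rq hhP hhX hhQ uP uX uQ i1 i2 i3 i4 i5 i6 i7 i8 i9 T R D : ℝ}
    (key : rn + (1/lmn*(uP - uX - i1) + i3 + aln/lmn*i9) ≤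
      rq + (1/lmn*(uQ - uX - i2) + i4 + aln/lmn*i8))
    (a2 : σ/(2*lamU)*T^2 ≤ 1/lmn*(uP - uX - i1))
    (a3 : 1/lmn*(uQ - uX - i2) ≤ Lu/(2*lamL)*R^2)
    (k4 : hhP ≤ hhX + i5 + Lh/2*T^2)
    (k5 : hhX ≤ hhQ + i6 + Lh/2*R^2)
    (ea6 : i4 - i3 + i5 + i6 = i6 - i7)
    (a6 : i6 - i7 ≤ Lh*R^2)
    (a7 : aln/lmn*i8 - aln/lmn*i9 ≤
      α/lamL*(μ*T^2 + (μ*(lamU*Lh)^2 + (1+lamU*Lh)^2/(2*μ))*D^2))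
    (a8 : (Lu/(2*lamL)+3/2*Lh)*R^2 ≤ (Lu/(2*lamL)+3/2*Lh)*((lamU*Lh)*D)^2)
    (g1 : (σ/(2*lamU) - Lh - ν - α/lamL*μ)*T^2 ≤ (σ/(2*lamU) - Lh/2 - α/lamL*μ)*T^2)
    (g2 : ((Lu/(2*lamL)+3/2*Lh)*(lamU*Lh)^2 +
        α/lamL*(μ*(lamU*Lh)^2+(1+lamU*Lh)^2/(2*μ)))*D^2 ≤
      (lamU^2*Lh^2*(Lh^2/(2*ν)+ν+Lh+Lu/(2*lamL)) +
        α/lamL*(μ*lamU^2*Lh^2+(1+lamU*Lh)^2/(2*μ)))*D^2) :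
    rn + (hhP + (σ/(2*lamU) - Lh - ν - α/lamL*μ)*T^2) ≤
      rq + (hhQ + (lamU^2*Lh^2*(Lh^2/(2*ν)+ν+Lh+Lu/(2*lamL)) +
        α/lamL*(μ*lamU^2*Lh^2+(1+lamU*Lh)^2/(2*μ)))*D^2) := by
  linarith

set_option maxHeartbeats 1000000 in
theorem stmt_12 {m : ℕ} (f : EuclideanSpace ℝ (Fin m) → EReal)
    (hproper : ∃ z, f z ≠ ⊤) (hbot : ∀ z, f z ≠ ⊥)
    (hlsc : LowerSemicontinuous f)
    (hfbdd : ∃ M : ℝ, ∀ z, (M : EReal) ≤ f z)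
    (h : EuclideanSpace ℝ (Fin m) → ℝ)
    (h' : EuclideanSpace ℝ (Fin m) → EuclideanSpace ℝ (Fin m))
    (hdiffh : ∀ z, HasGradientAt h (h' z) z)
    (Lh : ℝ) (hLh : 0 ≤ Lh)
    (hliph : ∀ z w, ‖h' z - h' w‖ ≤ Lh * ‖z - w‖)
    (u : EuclideanSpace ℝ (Fin m) → ℝ)
    (u' : EuclideanSpace ℝ (Fin m) → EuclideanSpace ℝ (Fin m))
    (hdiffu : ∀ z, HasGradientAt u (u' z) z)
    (σ : ℝ) (hσ : 0 < σ)
    (hconv : ConvexOn ℝ Set.univ (fun z => u z - σ / 2 * ‖z‖ ^ 2))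
    (Lu : ℝ) (hLu : 0 < Lu)
    (hlipu : ∀ z w, ‖u' z - u' w‖ ≤ Lu * ‖z - w‖)
    (lamL lamU α : ℝ) (hlamL : 0 < lamL) (hα : 0 ≤ α)
    (lam al : ℕ → ℝ)
    (hlam : ∀ n, 1 ≤ n → lamL ≤ lam n ∧ lam n ≤ lamU)
    (hal : ∀ n, 1 ≤ n → 0 ≤ al n ∧ al n ≤ α)
    (x p : ℕ → EuclideanSpace ℝ (Fin m))
    (hargmin : ∀ n, 1 ≤ n → ∀ y,
      f (p n) + ((1 / lam n * (u (p n) - u (x n) - (inner ℝ (u' (x n)) (p n - x n) : ℝ)) +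
        (inner ℝ (p n) (h' (x n)) : ℝ) +
        al n / lam n * (inner ℝ (p n) (x (n - 1) - x n) : ℝ) : ℝ) : EReal) ≤
      f y + ((1 / lam n * (u y - u (x n) - (inner ℝ (u' (x n)) (y - x n) : ℝ)) +
        (inner ℝ y (h' (x n)) : ℝ) +
        al n / lam n * (inner ℝ y (x (n - 1) - x n) : ℝ) : ℝ) : EReal))
    (hupd : ∀ n, 1 ≤ n → x (n + 1) = p n + lam n • (h' (x n) - h' (p n)))
    (ν μ : ℝ) (hν : 0 < ν) (hμ : 0 < μ) :
    ∀ n, 2 ≤ n →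
      f (p n) + ((h (p n) +
          (σ / (2 * lamU) - Lh - ν - α / lamL * μ) * ‖x n - p n‖ ^ 2 : ℝ) : EReal) ≤
      f (p (n - 1)) + ((h (p (n - 1)) +
          (lamU ^ 2 * Lh ^ 2 * (Lh ^ 2 / (2 * ν) + ν + Lh + Lu / (2 * lamL)) +
            α / lamL * (μ * lamU ^ 2 * Lh ^ 2 + (1 + lamU * Lh) ^ 2 / (2 * μ))) *
            ‖x (n - 1) - p (n - 1)‖ ^ 2 : ℝ) : EReal) := by
  obtain ⟨z₀, hz₀⟩ := hproper
  have hfin : ∀ k, 1 ≤ k → f (p k) ≠ ⊤ := by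
    intro k hk htop
    have key := hargmin k hk z₀
    rw [htop, EReal.top_add_of_ne_bot (EReal.coe_ne_bot _),
      ← EReal.coe_toReal hz₀ (hbot z₀), ← EReal.coe_add] at key
    exact (EReal.coe_ne_top _) (top_le_iff.mp key)
  intro n hn
  have hn1 : 1 ≤ n := le_trans one_le_two hn
  have hn1' : 1 ≤ n - 1 := by omega
  have hidx : n - 1 + 1 = n := by omega
  obtain ⟨hlmL, hlmU⟩ := hlam n hn1
  obtain ⟨hlmL', hlmU'⟩ := hlam (n - 1) hn1'
  obtain ⟨hal0, halα⟩ := hal n hn1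
  have hlm0 : 0 < lam n := lt_of_lt_of_le hlamL hlmL
  have hlm0' : 0 < lam (n - 1) := lt_of_lt_of_le hlamL hlmL'
  have hlamU0 : 0 < lamU := lt_of_lt_of_le hlm0 hlmU
  have key := hargmin n hn1 (p (n - 1))
  have hPfin := hfin n hn1
  have hQfin := hfin (n - 1) hn1'
  rw [← EReal.coe_toReal hPfin (hbot _), ← EReal.coe_toReal hQfin (hbot _),
    ← EReal.coe_add, ← EReal.coe_add] at key
  replace key := EReal.coe_le_coe_iff.mp key
  rw [← EReal.coe_toReal hPfin (hbot _), ← EReal.coe_toReal hQfin (hbot _),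
    ← EReal.coe_add, ← EReal.coe_add]
  apply EReal.coe_le_coe_iff.mpr
  -- now a real inequality
  -- update step: bound R := ‖x n - p (n-1)‖ by (lamU*Lh) * D
  have hupd' := hupd (n - 1) hn1'
  rw [hidx] at hupd'
  have hXQ : x n - p (n - 1) = lam (n - 1) • (h' (x (n - 1)) - h' (p (n - 1))) := by
    rw [hupd']; abel
  have hnormR : ‖x n - p (n - 1)‖ = lam (n - 1) * ‖h' (x (n - 1)) - h' (p (n - 1))‖ := by
    rw [hXQ, norm_smul, Real.norm_eq_abs, abs_of_pos hlm0']
  have b5 : ‖x n - p (n - 1)‖ ≤ (lamU * Lh) * ‖x (n - 1) - p (n - 1)‖ := by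
    rw [hnormR]
    calc lam (n - 1) * ‖h' (x (n - 1)) - h' (p (n - 1))‖
        ≤ lamU * (Lh * ‖x (n - 1) - p (n - 1)‖) :=
          mul_le_mul hlmU' (hliph _ _) (norm_nonneg _) (le_of_lt hlamU0)
      _ = (lamU * Lh) * ‖x (n - 1) - p (n - 1)‖ := by ring
  have hT0 : (0:ℝ) ≤ ‖x n - p n‖ := norm_nonneg _
  have hR0 : (0:ℝ) ≤ ‖x n - p (n - 1)‖ := norm_nonneg _
  have hD0 : (0:ℝ) ≤ ‖x (n - 1) - p (n - 1)‖ := norm_nonneg _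
  have hc0 : (0:ℝ) ≤ lamU * Lh := mul_nonneg (le_of_lt hlamU0) hLh
  -- strong convexity bound (A2)
  have a2 : σ / (2 * lamU) * ‖x n - p n‖ ^ 2 ≤
      1 / lam n * (u (p n) - u (x n) - (inner ℝ (u' (x n)) (p n - x n) : ℝ)) := by
    have k2 := aux_strong u u' hdiffu σ hconv (x n) (p n)
    rw [norm_sub_rev (p n) (x n)] at k2
    have h1 : 1 / lam n * (σ / 2 * ‖x n - p n‖ ^ 2) ≤
        1 / lam n * (u (p n) - u (x n) - (inner ℝ (u' (x n)) (p n - x n) : ℝ)) := by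
      apply mul_le_mul_of_nonneg_left (by linarith) (by positivity)
    have h2 : 1 / lam n * (σ / 2 * ‖x n - p n‖ ^ 2) = σ / (2 * lam n) * ‖x n - p n‖ ^ 2 := by
      ring
    have h3 : σ / (2 * lamU) * ‖x n - p n‖ ^ 2 ≤ σ / (2 * lam n) * ‖x n - p n‖ ^ 2 := by
      apply mul_le_mul_of_nonneg_right _ (sq_nonneg _)
      apply div_le_div_of_nonneg_left (le_of_lt hσ) (by linarith) (by linarith)
    linarith
  -- Lu descent bound (A3)
  have a3 : 1 / lam n * (u (p (n - 1)) - u (x n) - (inner ℝ (u' (x n)) (p (n - 1) - x n) : ℝ)) ≤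
      Lu / (2 * lamL) * ‖x n - p (n - 1)‖ ^ 2 := by
    have k3 := aux_descent u u' hdiffu Lu (le_of_lt hLu) hlipu (x n) (p (n - 1))
    rw [norm_sub_rev (p (n - 1)) (x n)] at k3
    have h1 : 1 / lam n * (u (p (n - 1)) - u (x n) - (inner ℝ (u' (x n)) (p (n - 1) - x n) : ℝ)) ≤
        1 / lam n * (Lu / 2 * ‖x n - p (n - 1)‖ ^ 2) :=
      mul_le_mul_of_nonneg_left (by linarith) (by positivity)
    have h2 : 1 / lam n * (Lu / 2 * ‖x n - p (n - 1)‖ ^ 2) ≤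
        1 / lamL * (Lu / 2 * ‖x n - p (n - 1)‖ ^ 2) := by
      apply mul_le_mul_of_nonneg_right (one_div_le_one_div_of_le hlamL hlmL) (by positivity)
    have h3 : 1 / lamL * (Lu / 2 * ‖x n - p (n - 1)‖ ^ 2) =
        Lu / (2 * lamL) * ‖x n - p (n - 1)‖ ^ 2 := by ring
    linarith
  -- h descent (A4, A5)
  have k4 : h (p n) ≤ h (x n) + (inner ℝ (h' (x n)) (p n - x n) : ℝ) + Lh / 2 * ‖x n - p n‖ ^ 2 := by
    have := aux_descent h h' hdiffh Lh hLh hliph (x n) (p n)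
    rw [norm_sub_rev (p n) (x n)] at this
    exact this
  have k5 : h (x n) ≤ h (p (n - 1)) + (inner ℝ (h' (p (n - 1))) (x n - p (n - 1)) : ℝ) +
      Lh / 2 * ‖x n - p (n - 1)‖ ^ 2 :=
    aux_descent h h' hdiffh Lh hLh hliph (p (n - 1)) (x n)
  -- cross term bound (A6)
  have ea6 : (inner ℝ (p (n - 1)) (h' (x n)) : ℝ) - (inner ℝ (p n) (h' (x n)) : ℝ) +
      (inner ℝ (h' (x n)) (p n - x n) : ℝ) + (inner ℝ (h' (p (n - 1))) (x n - p (n - 1)) : ℝ) =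
      (inner ℝ (h' (p (n - 1))) (x n - p (n - 1)) : ℝ) -
      (inner ℝ (h' (x n)) (x n - p (n - 1)) : ℝ) := by
    simp only [inner_sub_right]
    have c1 : (inner ℝ (p (n - 1)) (h' (x n)) : ℝ) = inner ℝ (h' (x n)) (p (n - 1)) :=
      real_inner_comm _ _
    have c2 : (inner ℝ (p n) (h' (x n)) : ℝ) = inner ℝ (h' (x n)) (p n) := real_inner_comm _ _
    linarith
  have a6 : (inner ℝ (h' (p (n - 1))) (x n - p (n - 1)) : ℝ) -
      (inner ℝ (h' (x n)) (x n - p (n - 1)) : ℝ) ≤ Lh * ‖x n - p (n - 1)‖ ^ 2 := by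
    have h1 : (inner ℝ (h' (p (n - 1)) - h' (x n)) (x n - p (n - 1)) : ℝ) ≤
        ‖h' (p (n - 1)) - h' (x n)‖ * ‖x n - p (n - 1)‖ := real_inner_le_norm _ _
    have h2 := hliph (p (n - 1)) (x n)
    rw [norm_sub_rev (p (n - 1)) (x n)] at h2
    rw [inner_sub_left] at h1
    nlinarith [norm_nonneg (x n - p (n - 1)), norm_nonneg (h' (p (n - 1)) - h' (x n))]
  -- inertial term (A7)
  have a7 : al n / lam n * (inner ℝ (p (n - 1)) (x (n - 1) - x n) : ℝ) -
      al n / lam n * (inner ℝ (p n) (x (n - 1) - x n) : ℝ) ≤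
      α / lamL * (μ * ‖x n - p n‖ ^ 2 +
        (μ * (lamU * Lh) ^ 2 + (1 + lamU * Lh) ^ 2 / (2 * μ)) *
          ‖x (n - 1) - p (n - 1)‖ ^ 2) := by
    have eI : (inner ℝ (p (n - 1)) (x (n - 1) - x n) : ℝ) -
        (inner ℝ (p n) (x (n - 1) - x n) : ℝ) =
        (inner ℝ (p (n - 1) - p n) (x (n - 1) - x n) : ℝ) := by rw [inner_sub_left]
    have b1 : (inner ℝ (p (n - 1) - p n) (x (n - 1) - x n) : ℝ) ≤
        ‖p (n - 1) - p n‖ * ‖x (n - 1) - x n‖ := real_inner_le_norm _ _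
    have b2 : ‖p (n - 1) - p n‖ ≤ ‖x n - p (n - 1)‖ + ‖x n - p n‖ := by
      have e : p (n - 1) - p n = (p (n - 1) - x n) + (x n - p n) := by abel
      rw [e]
      calc ‖(p (n - 1) - x n) + (x n - p n)‖ ≤ ‖p (n - 1) - x n‖ + ‖x n - p n‖ :=
            norm_add_le _ _
        _ = ‖x n - p (n - 1)‖ + ‖x n - p n‖ := by rw [norm_sub_rev (p (n - 1)) (x n)]
    have b3 : ‖x (n - 1) - x n‖ ≤ ‖x (n - 1) - p (n - 1)‖ + ‖x n - p (n - 1)‖ := by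
      have e : x (n - 1) - x n = (x (n - 1) - p (n - 1)) + (p (n - 1) - x n) := by abel
      rw [e]
      calc ‖(x (n - 1) - p (n - 1)) + (p (n - 1) - x n)‖ ≤
            ‖x (n - 1) - p (n - 1)‖ + ‖p (n - 1) - x n‖ := norm_add_le _ _
        _ = ‖x (n - 1) - p (n - 1)‖ + ‖x n - p (n - 1)‖ := by
            rw [norm_sub_rev (p (n - 1)) (x n)]
    have b4 : ‖p (n - 1) - p n‖ * ‖x (n - 1) - x n‖ ≤
        (‖x n - p (n - 1)‖ + ‖x n - p n‖) *
          (‖x (n - 1) - p (n - 1)‖ + ‖x n - p (n - 1)‖) :=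
      mul_le_mul b2 b3 (norm_nonneg _) (by linarith)
    have b6 : (‖x n - p (n - 1)‖ + ‖x n - p n‖) *
        (‖x (n - 1) - p (n - 1)‖ + ‖x n - p (n - 1)‖) ≤
        ((lamU * Lh) * ‖x (n - 1) - p (n - 1)‖ + ‖x n - p n‖) *
          ((1 + lamU * Lh) * ‖x (n - 1) - p (n - 1)‖) := by
      apply mul_le_mul (by linarith) (by linarith) (by linarith)
      nlinarith [mul_nonneg hc0 hD0]
    have b7 : ((lamU * Lh) * ‖x (n - 1) - p (n - 1)‖ + ‖x n - p n‖) *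
        ((1 + lamU * Lh) * ‖x (n - 1) - p (n - 1)‖) ≤
        μ * ‖x n - p n‖ ^ 2 + (μ * (lamU * Lh) ^ 2 + (1 + lamU * Lh) ^ 2 / (2 * μ)) *
          ‖x (n - 1) - p (n - 1)‖ ^ 2 := by
      rw [← sub_nonneg]
      have heq : μ * ‖x n - p n‖ ^ 2 + (μ * (lamU * Lh) ^ 2 + (1 + lamU * Lh) ^ 2 / (2 * μ)) *
          ‖x (n - 1) - p (n - 1)‖ ^ 2 -
          ((lamU * Lh) * ‖x (n - 1) - p (n - 1)‖ + ‖x n - p n‖) *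
            ((1 + lamU * Lh) * ‖x (n - 1) - p (n - 1)‖) =
          ((2 * μ * ‖x n - p n‖ - (1 + lamU * Lh) * ‖x (n - 1) - p (n - 1)‖) ^ 2 +
            (2 * μ * (lamU * Lh) * ‖x (n - 1) - p (n - 1)‖ -
              (1 + lamU * Lh) * ‖x (n - 1) - p (n - 1)‖) ^ 2) / (4 * μ) := by
        field_simp
        ring
      rw [heq]
      positivity
    have b8 : 0 ≤ al n / lam n := div_nonneg hal0 (le_of_lt hlm0)
    have b9 : al n / lam n ≤ α / lamL := div_le_div₀ hα halα hlamL hlmL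
    have b10 : 0 ≤ μ * ‖x n - p n‖ ^ 2 +
        (μ * (lamU * Lh) ^ 2 + (1 + lamU * Lh) ^ 2 / (2 * μ)) *
          ‖x (n - 1) - p (n - 1)‖ ^ 2 := by
      apply add_nonneg (mul_nonneg (le_of_lt hμ) (sq_nonneg _))
      apply mul_nonneg _ (sq_nonneg _)
      apply add_nonneg (mul_nonneg (le_of_lt hμ) (sq_nonneg _))
      apply div_nonneg (sq_nonneg _) (by linarith)
    have main : al n / lam n * (inner ℝ (p (n - 1) - p n) (x (n - 1) - x n) : ℝ) ≤
        α / lamL * (μ * ‖x n - p n‖ ^ 2 +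
          (μ * (lamU * Lh) ^ 2 + (1 + lamU * Lh) ^ 2 / (2 * μ)) *
            ‖x (n - 1) - p (n - 1)‖ ^ 2) := calc
      al n / lam n * (inner ℝ (p (n - 1) - p n) (x (n - 1) - x n) : ℝ) ≤
        al n / lam n * (μ * ‖x n - p n‖ ^ 2 +
          (μ * (lamU * Lh) ^ 2 + (1 + lamU * Lh) ^ 2 / (2 * μ)) *
            ‖x (n - 1) - p (n - 1)‖ ^ 2) :=
          mul_le_mul_of_nonneg_left (by linarith) b8
      _ ≤ α / lamL * (μ * ‖x n - p n‖ ^ 2 +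
          (μ * (lamU * Lh) ^ 2 + (1 + lamU * Lh) ^ 2 / (2 * μ)) *
            ‖x (n - 1) - p (n - 1)‖ ^ 2) := mul_le_mul_of_nonneg_right b9 b10
    rw [inner_sub_left] at main
    linarith [main]
  -- R^2 to D^2 (A8)
  have a8 : (Lu / (2 * lamL) + 3 / 2 * Lh) * ‖x n - p (n - 1)‖ ^ 2 ≤
      (Lu / (2 * lamL) + 3 / 2 * Lh) * ((lamU * Lh) * ‖x (n - 1) - p (n - 1)‖) ^ 2 := by
    apply mul_le_mul_of_nonneg_left (pow_le_pow_left₀ hR0 b5 2)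
    have : 0 ≤ Lu / (2 * lamL) := div_nonneg (le_of_lt hLu) (by linarith)
    linarith
  -- final coefficient comparisons
  have hq : Lh / 2 ≤ Lh ^ 2 / (2 * ν) + ν := by
    rw [← sub_nonneg]
    have heq : Lh ^ 2 / (2 * ν) + ν - Lh / 2 = (Lh ^ 2 + 2 * ν ^ 2 - ν * Lh) / (2 * ν) := by
      field_simp
    rw [heq]
    apply div_nonneg _ (by linarith)
    nlinarith [sq_nonneg (Lh - ν), mul_nonneg (le_of_lt hν) hLh]
  have hq' : (3 / 2 * Lh) * (lamU * Lh) ^ 2 ≤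
      (Lh ^ 2 / (2 * ν) + ν + Lh) * (lamU ^ 2 * Lh ^ 2) := by
    have hsq : (0:ℝ) ≤ lamU ^ 2 * Lh ^ 2 := by positivity
    nlinarith [mul_le_mul_of_nonneg_right hq hsq]
  have cmp2 : (Lu / (2 * lamL) + 3 / 2 * Lh) * (lamU * Lh) ^ 2 +
      α / lamL * (μ * (lamU * Lh) ^ 2 + (1 + lamU * Lh) ^ 2 / (2 * μ)) ≤
      lamU ^ 2 * Lh ^ 2 * (Lh ^ 2 / (2 * ν) + ν + Lh + Lu / (2 * lamL)) +
        α / lamL * (μ * lamU ^ 2 * Lh ^ 2 + (1 + lamU * Lh) ^ 2 / (2 * μ)) := by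
    linarith [hq']
  have g2 : ((Lu / (2 * lamL) + 3 / 2 * Lh) * (lamU * Lh) ^ 2 +
      α / lamL * (μ * (lamU * Lh) ^ 2 + (1 + lamU * Lh) ^ 2 / (2 * μ))) *
        ‖x (n - 1) - p (n - 1)‖ ^ 2 ≤
      (lamU ^ 2 * Lh ^ 2 * (Lh ^ 2 / (2 * ν) + ν + Lh + Lu / (2 * lamL)) +
        α / lamL * (μ * lamU ^ 2 * Lh ^ 2 + (1 + lamU * Lh) ^ 2 / (2 * μ))) *
        ‖x (n - 1) - p (n - 1)‖ ^ 2 :=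
    mul_le_mul_of_nonneg_right cmp2 (sq_nonneg _)
  have g1 : (σ / (2 * lamU) - Lh - ν - α / lamL * μ) * ‖x n - p n‖ ^ 2 ≤
      (σ / (2 * lamU) - Lh / 2 - α / lamL * μ) * ‖x n - p n‖ ^ 2 :=
    mul_le_mul_of_nonneg_right (by linarith) (sq_nonneg _)
  exact aux_final key a2 a3 k4 k5 ea6 a6 a7 a8 g1 g2
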